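/- Let δ ≥ 0 and 1 < p⁻ ≤ p⁺ < ∞. There exists a constant c > 0, depending only on p⁻, p⁺ and δ, such that for every exponent p ∈ [p⁻, p⁺], every shift a ≥ 0 and every r ≥ 0 one has ((φ_p)_a)*(2r) ≤ c · 2^{max{2, (p⁻)'}} · ((φ_p)_a)*(r), where (p⁻)' := p⁻/(p⁻−1); in particular the conjugates ((φ_p)_a)* satisfy the Δ₂-condition uniformly in a ≥ 0 and p ∈ [p⁻, p⁺]. -/

import Mathlib

open MeasureTheory

/-- The shifted N-function `(φ_p)_a(r) = ∫₀^r (δ+a+s)^{p-2} s ds`. -/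
noncomputable def phiShift (δ p a r : ℝ) : ℝ :=
  ∫ s in (0:ℝ)..r, (δ + a + s) ^ (p - 2) * s

/-- The Fenchel conjugate `ψ*(r) = sup_{s ≥ 0} (r·s − ψ(s))`. -/
noncomputable def fconj (ψ : ℝ → ℝ) (r : ℝ) : ℝ :=
  ⨆ s : NNReal, (r * (s : ℝ) - ψ (s : ℝ))

/-- integrand -/
noncomputable def phiF (c p u : ℝ) : ℝ := (c + u) ^ (p - 2) * u

lemma phiF_eq (c p : ℝ) (hc : 0 ≤ c) {u : ℝ} (hu : 0 ≤ u) :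
    phiF c p u = (c + u) ^ (p - 1) * (u / (c + u)) := by
  rcases eq_or_lt_of_le (by positivity : (0:ℝ) ≤ c + u) with h | h
  · rw [phiF, ← h]
    have hu0 : u = 0 := by nlinarith
    simp [hu0]
  · rw [phiF, show p - 2 = (p - 1) - 1 by ring, Real.rpow_sub_one h.ne']
    field_simp

lemma phiF_nonneg (c p : ℝ) (hc : 0 ≤ c) {u : ℝ} (hu : 0 ≤ u) : 0 ≤ phiF c p u := by
  have : 0 ≤ (c + u) ^ (p - 2) := Real.rpow_nonneg (by positivity) _
  exact mul_nonneg this hu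

lemma phiF_mono (c p : ℝ) (hc : 0 ≤ c) (hp : 1 ≤ p) :
    MonotoneOn (phiF c p) (Set.Ici 0) := by
  intro u hu v hv huv
  simp only [Set.mem_Ici] at hu hv
  rw [phiF_eq c p hc hu, phiF_eq c p hc hv]
  have h1 : (c + u) ^ (p - 1) ≤ (c + v) ^ (p - 1) :=
    Real.rpow_le_rpow (by positivity) (by linarith) (by linarith)
  have h2 : u / (c + u) ≤ v / (c + v) := by
    rcases eq_or_lt_of_le (by positivity : (0:ℝ) ≤ c + u) with h | h
    · have hu0 : u = 0 := by nlinarith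
      simp [hu0]
      positivity
    · rw [div_le_div_iff₀ h (by linarith)]
      nlinarith
  have h3 : 0 ≤ u / (c + u) := by positivity
  exact mul_le_mul h1 h2 h3 (Real.rpow_nonneg (by positivity) _)

lemma phiF_intble (c p : ℝ) (hc : 0 ≤ c) (hp : 1 ≤ p) {x y : ℝ} (hx : 0 ≤ x) (hy : 0 ≤ y) :
    IntervalIntegrable (phiF c p) volume x y :=
  ((phiF_mono c p hc hp).mono (fun z hz => Set.mem_Ici.2
    (le_trans (le_inf hx hy) hz.1))).intervalIntegrable

lemma phiInt_nonneg (c p : ℝ) (hc : 0 ≤ c) {t : ℝ} (ht : 0 ≤ t) :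
    0 ≤ ∫ s in (0:ℝ)..t, phiF c p s :=
  intervalIntegral.integral_nonneg ht (fun u hu => phiF_nonneg c p hc hu.1)

lemma phiF_scale (c p : ℝ) (hc : 0 ≤ c) (hp : 1 < p) {l u : ℝ} (hl : 0 < l) (hl1 : l ≤ 1)
    (hu : 0 ≤ u) : phiF c p (l * u) ≤ l ^ (min 2 p - 1) * phiF c p u := by
  rcases eq_or_lt_of_le (by positivity : (0:ℝ) ≤ c + u) with h | h
  · have hc0 : c = 0 := by nlinarith
    have hu0 : u = 0 := by nlinarith
    simp [phiF, hc0, hu0]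
  rcases le_total 2 p with h2 | h2
  · have hmin : min 2 p = 2 := min_eq_left h2
    rw [hmin]
    have : (c + l * u) ^ (p - 2) ≤ (c + u) ^ (p - 2) :=
      Real.rpow_le_rpow (by positivity) (by nlinarith) (by linarith)
    calc (c + l * u) ^ (p - 2) * (l * u) ≤ (c + u) ^ (p - 2) * (l * u) :=
          mul_le_mul_of_nonneg_right this (by positivity)
      _ = l ^ ((2:ℝ) - 1) * phiF c p u := by
          rw [show ((2:ℝ) - 1) = 1 by norm_num, Real.rpow_one, phiF]; ring
  · have hmin : min 2 p = p := min_eq_right h2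
    rw [hmin]
    have h3 : (c + l * u) ^ (p - 2) ≤ (l * (c + u)) ^ (p - 2) :=
      Real.rpow_le_rpow_of_nonpos (by positivity) (by nlinarith) (by linarith)
    have h4 : (l * (c + u)) ^ (p - 2) = l ^ (p - 2) * (c + u) ^ (p - 2) :=
      Real.mul_rpow hl.le (by positivity)
    calc (c + l * u) ^ (p - 2) * (l * u) ≤ l ^ (p - 2) * (c + u) ^ (p - 2) * (l * u) := by
          rw [← h4]; exact mul_le_mul_of_nonneg_right h3 (by positivity)
      _ = l ^ (p - 2) * l ^ (1:ℝ) * phiF c p u := by rw [Real.rpow_one, phiF]; ring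
      _ = l ^ (p - 1) * phiF c p u := by
          rw [← Real.rpow_add hl, show p - 2 + (1:ℝ) = p - 1 by ring]

lemma phiInt_scale (c p : ℝ) (hc : 0 ≤ c) (hp : 1 < p) {l t : ℝ} (hl : 0 < l) (hl1 : l ≤ 1)
    (ht : 0 ≤ t) :
    (∫ s in (0:ℝ)..(l * t), phiF c p s) ≤ l ^ (min 2 p) * ∫ s in (0:ℝ)..t, phiF c p s := by
  have hInt : IntervalIntegrable (phiF c p) volume 0 (l * t) :=
    phiF_intble c p hc hp.le le_rfl (by positivity)
  have hcomp : IntervalIntegrable (fun u => phiF c p (l * u)) volume 0 t := by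
    have := hInt.comp_mul_left (c := l)
    rwa [zero_div, mul_div_cancel_left₀ _ hl.ne'] at this
  have key : l * (∫ u in (0:ℝ)..t, phiF c p (l * u)) = ∫ s in (0:ℝ)..(l * t), phiF c p s := by
    have h := intervalIntegral.smul_integral_comp_mul_left (f := phiF c p) (a := 0) (b := t) l
    simpa using h
  rw [← key]
  have mono : (∫ u in (0:ℝ)..t, phiF c p (l * u)) ≤
      ∫ u in (0:ℝ)..t, l ^ (min 2 p - 1) * phiF c p u := by
    apply intervalIntegral.integral_mono_on ht hcomp
    · exact (phiF_intble c p hc hp.le le_rfl ht).const_mul _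
    · exact fun u hu => phiF_scale c p hc hp hl hl1 hu.1
  rw [intervalIntegral.integral_const_mul] at mono
  calc l * ∫ u in (0:ℝ)..t, phiF c p (l * u)
      ≤ l * (l ^ (min 2 p - 1) * ∫ u in (0:ℝ)..t, phiF c p u) :=
        mul_le_mul_of_nonneg_left mono hl.le
    _ = l ^ (min 2 p) * ∫ s in (0:ℝ)..t, phiF c p s := by
        rw [← mul_assoc, show l * l ^ (min 2 p - 1) = l ^ (1:ℝ) * l ^ (min 2 p - 1) by
          rw [Real.rpow_one], ← Real.rpow_add hl]
        norm_num

lemma phiF_lower (c p : ℝ) (hc : 0 ≤ c) (hp : 1 < p) {v : ℝ} (hv : 0 ≤ v) (hcv : c ≤ v) :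
    min 1 ((2:ℝ) ^ (p - 2)) * v ^ (p - 1) ≤ phiF c p v := by
  rcases eq_or_lt_of_le hv with h0 | h0
  · rw [← h0]
    simp [phiF, Real.zero_rpow (by linarith : p - 1 ≠ 0)]
  have hv1 : v ^ (p - 2) * v = v ^ (p - 1) := by
    nth_rewrite 2 [← Real.rpow_one v]
    rw [← Real.rpow_add h0, show p - 2 + 1 = p - 1 by ring]
  rcases le_total 2 p with h2 | h2
  · have hb : v ^ (p - 2) ≤ (c + v) ^ (p - 2) :=
      Real.rpow_le_rpow hv (by linarith) (by linarith)
    calc min 1 ((2:ℝ) ^ (p - 2)) * v ^ (p - 1) ≤ 1 * v ^ (p - 1) :=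
          mul_le_mul_of_nonneg_right (min_le_left _ _) (Real.rpow_nonneg hv _)
      _ = v ^ (p - 2) * v := by rw [one_mul, hv1]
      _ ≤ phiF c p v := mul_le_mul_of_nonneg_right hb hv
  · have hb : (2 * v) ^ (p - 2) ≤ (c + v) ^ (p - 2) :=
      Real.rpow_le_rpow_of_nonpos (by positivity) (by linarith) (by linarith)
    have hsplit : ((2:ℝ) * v) ^ (p - 2) = 2 ^ (p - 2) * v ^ (p - 2) :=
      Real.mul_rpow (by norm_num) hv
    calc min 1 ((2:ℝ) ^ (p - 2)) * v ^ (p - 1) ≤ 2 ^ (p - 2) * v ^ (p - 1) :=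
          mul_le_mul_of_nonneg_right (min_le_right _ _) (Real.rpow_nonneg hv _)
      _ = 2 ^ (p - 2) * v ^ (p - 2) * v := by rw [mul_assoc, hv1]
      _ = (2 * v) ^ (p - 2) * v := by rw [hsplit]
      _ ≤ phiF c p v := mul_le_mul_of_nonneg_right hb hv

lemma phiInt_lower (c p : ℝ) (hc : 0 ≤ c) (hp : 1 < p) {s : ℝ} (hs : 0 ≤ s) (hcs : 2 * c ≤ s) :
    (s / 2) * phiF c p (s / 2) ≤ ∫ u in (0:ℝ)..s, phiF c p u := by
  have h1 : IntervalIntegrable (phiF c p) volume 0 (s / 2) :=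
    phiF_intble c p hc hp.le le_rfl (by linarith)
  have h2 : IntervalIntegrable (phiF c p) volume (s / 2) s :=
    phiF_intble c p hc hp.le (by linarith) hs
  rw [← intervalIntegral.integral_add_adjacent_intervals h1 h2]
  have hA : 0 ≤ ∫ u in (0:ℝ)..(s / 2), phiF c p u := phiInt_nonneg c p hc (by linarith)
  have hB : (s / 2) * phiF c p (s / 2) ≤ ∫ u in (s / 2)..s, phiF c p u := by
    have : ∫ u in (s / 2)..s, phiF c p (s / 2) ≤ ∫ u in (s / 2)..s, phiF c p u := by
      apply intervalIntegral.integral_mono_on (by linarith) (by simp) h2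
      exact fun u hu => phiF_mono c p hc hp.le (by simp; linarith) (by simp; linarith [hu.1]) hu.1
    rw [intervalIntegral.integral_const] at this
    calc (s / 2) * phiF c p (s / 2) = (s - s / 2) • phiF c p (s / 2) := by
          rw [smul_eq_mul]; ring_nf
      _ ≤ _ := this
  linarith

lemma phi_bddAbove (c p r : ℝ) (hc : 0 ≤ c) (hp : 1 < p) :
    BddAbove (Set.range fun s : NNReal => r * (s : ℝ) - ∫ u in (0:ℝ)..(s : ℝ), phiF c p u) := by
  set μ : ℝ := min 1 ((2:ℝ) ^ (p - 2)) with hμdef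
  have hμ : 0 < μ := lt_min one_pos (Real.rpow_pos_of_pos two_pos _)
  set B : ℝ := (max (2 * r / μ) 1) ^ (1 / (p - 1)) with hBdef
  have hB0 : 0 < B := Real.rpow_pos_of_pos (lt_of_lt_of_le one_pos (le_max_right _ _)) _
  set S : ℝ := max (2 * c) (2 * B) with hSdef
  have hS0 : 0 ≤ S := le_trans (by positivity) (le_max_right _ _)
  refine ⟨|r| * S, ?_⟩
  rintro x ⟨s, rfl⟩
  simp only
  have hs0 : (0:ℝ) ≤ (s : ℝ) := s.2
  rcases le_total (s : ℝ) S with hle | hgt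
  · have h1 : r * (s : ℝ) ≤ |r| * S := by
      calc r * (s : ℝ) ≤ |r| * (s : ℝ) := mul_le_mul_of_nonneg_right (le_abs_self r) hs0
        _ ≤ |r| * S := mul_le_mul_of_nonneg_left hle (abs_nonneg r)
    have h2 : 0 ≤ ∫ u in (0:ℝ)..(s : ℝ), phiF c p u := phiInt_nonneg c p hc hs0
    linarith
  · -- s ≥ S : show r*s ≤ ψ(s)
    have hs2c : 2 * c ≤ (s : ℝ) := le_trans (le_max_left _ _) hgt
    have hsB : B ≤ (s : ℝ) / 2 := by
      have := le_trans (le_max_right (2*c) (2*B)) hgt; linarith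
    have hlow : (s / 2 : ℝ) * phiF c p ((s : ℝ) / 2) ≤ ∫ u in (0:ℝ)..(s:ℝ), phiF c p u :=
      phiInt_lower c p hc hp hs0 hs2c
    have hfl : μ * ((s : ℝ) / 2) ^ (p - 1) ≤ phiF c p ((s : ℝ) / 2) :=
      phiF_lower c p hc hp (by linarith) (by linarith)
    have hBpow : max (2 * r / μ) 1 ≤ ((s : ℝ) / 2) ^ (p - 1) := by
      have h1 : B ^ (p - 1) ≤ ((s : ℝ) / 2) ^ (p - 1) :=
        Real.rpow_le_rpow hB0.le hsB (by linarith)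
      have h2 : B ^ (p - 1) = max (2 * r / μ) 1 := by
        rw [hBdef, ← Real.rpow_mul (le_trans zero_le_one (le_max_right _ _)),
          one_div, inv_mul_cancel₀ (by linarith : p - 1 ≠ 0), Real.rpow_one]
      linarith [h2 ▸ h1]
    have hrs : r * (s : ℝ) ≤ ∫ u in (0:ℝ)..(s:ℝ), phiF c p u := by
      have key : 2 * r ≤ μ * ((s : ℝ) / 2) ^ (p - 1) := by
        have : 2 * r / μ ≤ ((s : ℝ) / 2) ^ (p - 1) := le_trans (le_max_left _ _) hBpow
        calc 2 * r = μ * (2 * r / μ) := by field_simp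
          _ ≤ μ * ((s : ℝ) / 2) ^ (p - 1) := mul_le_mul_of_nonneg_left this hμ.le
      calc r * (s : ℝ) = (2 * r) * ((s : ℝ) / 2) := by ring
        _ ≤ (μ * ((s : ℝ) / 2) ^ (p - 1)) * ((s : ℝ) / 2) :=
            mul_le_mul_of_nonneg_right key (by linarith)
        _ ≤ ((s : ℝ) / 2) * phiF c p ((s : ℝ) / 2) := by
            rw [mul_comm]
            exact mul_le_mul_of_nonneg_left hfl (by linarith)
        _ ≤ _ := hlow
    have : (0:ℝ) ≤ |r| * S := mul_nonneg (abs_nonneg r) hS0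
    linarith

theorem stmt3 (δ pm pp : ℝ) (hδ : 0 ≤ δ) (hpm : 1 < pm) (hpmpp : pm ≤ pp) :
    ∃ c : ℝ, 0 < c ∧ ∀ p : ℝ, pm ≤ p → p ≤ pp → ∀ a : ℝ, 0 ≤ a → ∀ r : ℝ, 0 ≤ r →
      fconj (phiShift δ p a) (2 * r) ≤
        c * (2 : ℝ) ^ (max 2 (pm / (pm - 1))) * fconj (phiShift δ p a) r := by
  refine ⟨1, one_pos, ?_⟩
  intro p hpmp hppp a ha r hr
  have hp : 1 < p := lt_of_lt_of_le hpm hpmp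
  set C : ℝ := δ + a with hC
  have hc : 0 ≤ C := by positivity
  set q : ℝ := min 2 pm with hq
  have hq1 : 1 < q := lt_min one_lt_two hpm
  have hqne : q - 1 ≠ 0 := by intro h; linarith [sub_eq_zero.mp h]
  set l : ℝ := (2:ℝ) ^ (-(1 / (q - 1))) with hl
  have hl0 : 0 < l := Real.rpow_pos_of_pos two_pos _
  have hl1 : l ≤ 1 := by
    apply Real.rpow_le_one_of_one_le_of_nonpos one_le_two
    have : 0 < 1 / (q - 1) := div_pos one_pos (by linarith)
    linarith
  have hψ : ∀ t : ℝ, phiShift δ p a t = ∫ u in (0:ℝ)..t, phiF C p u := fun t => rfl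
  have hbdd : BddAbove (Set.range fun s : NNReal => r * (s : ℝ) - phiShift δ p a (s : ℝ)) := by
    have := phi_bddAbove C p r hc hp
    simpa [hψ] using this
  -- exponent identities
  have hexp1 : (-(1 / (q - 1))) * (1 - q) = 1 := by field_simp; ring
  have h2eq : l ^ (1 - q) = 2 := by
    rw [hl, ← Real.rpow_mul (by norm_num : (0:ℝ) ≤ 2), hexp1, Real.rpow_one]
  have hCq : l ^ (-q) = (2:ℝ) ^ (q / (q - 1)) := by
    rw [hl, ← Real.rpow_mul (by norm_num : (0:ℝ) ≤ 2)]
    congr 1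
    field_simp
  have hmaxeq : q / (q - 1) = max 2 (pm / (pm - 1)) := by
    rcases le_total pm 2 with h | h
    · have hqpm : q = pm := min_eq_right h
      have h2le : 2 ≤ pm / (pm - 1) := by
        rw [le_div_iff₀ (by linarith : (0:ℝ) < pm - 1)]; linarith
      rw [hqpm, max_eq_right h2le]
    · have hqpm : q = 2 := min_eq_left h
      have h2le : pm / (pm - 1) ≤ 2 := by
        rw [div_le_iff₀ (by linarith : (0:ℝ) < pm - 1)]; linarith
      rw [hqpm, max_eq_left h2le]; norm_num
  rw [one_mul, ← hmaxeq, ← hCq]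
  -- main estimate
  have hll : l ^ q * 2 = l := by
    rw [← h2eq, ← Real.rpow_add hl0, show q + (1 - q) = 1 by ring, Real.rpow_one]
  have hinv : l ^ (-q) * l ^ q = 1 := by
    rw [← Real.rpow_add hl0]; simp
  rw [fconj]
  apply ciSup_le
  intro s
  have hs0 : (0:ℝ) ≤ (s : ℝ) := s.2
  set s' : NNReal := ⟨l * (s : ℝ), by positivity⟩ with hs'
  have hs'c : ((s' : NNReal) : ℝ) = l * (s : ℝ) := rfl
  have hψnn : 0 ≤ phiShift δ p a (s : ℝ) := by rw [hψ]; exact phiInt_nonneg C p hc hs0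
  have hscale : phiShift δ p a (l * (s : ℝ)) ≤ l ^ q * phiShift δ p a (s : ℝ) := by
    have h1 : phiShift δ p a (l * (s : ℝ)) ≤ l ^ (min 2 p) * phiShift δ p a (s : ℝ) := by
      rw [hψ, hψ]; exact phiInt_scale C p hc hp hl0 hl1 hs0
    have h2 : l ^ (min 2 p) ≤ l ^ q :=
      Real.rpow_le_rpow_of_exponent_ge hl0 hl1
        (le_min (min_le_left _ _) (le_trans (min_le_right _ _) hpmp))
    exact le_trans h1 (mul_le_mul_of_nonneg_right h2 hψnn)
  have hkey : l ^ q * ((2 * r) * (s : ℝ) - phiShift δ p a (s : ℝ)) ≤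
      r * (l * (s : ℝ)) - phiShift δ p a (l * (s : ℝ)) := by
    rw [mul_sub]
    have hmul : l ^ q * ((2 * r) * (s : ℝ)) = r * (l * (s : ℝ)) := by
      rw [show l ^ q * ((2 * r) * (s : ℝ)) = (l ^ q * 2) * (r * (s : ℝ)) by ring, hll]; ring
    linarith [hscale]
  have hmem : r * (l * (s : ℝ)) - phiShift δ p a (l * (s : ℝ)) ≤ fconj (phiShift δ p a) r := by
    have := le_ciSup hbdd s'
    rw [hs'c] at this
    exact this
  calc (2 * r) * (s : ℝ) - phiShift δ p a (s : ℝ)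
      = l ^ (-q) * (l ^ q * ((2 * r) * (s : ℝ) - phiShift δ p a (s : ℝ))) := by
        rw [← mul_assoc, hinv, one_mul]
    _ ≤ l ^ (-q) * fconj (phiShift δ p a) r :=
        mul_le_mul_of_nonneg_left (le_trans hkey hmem) (Real.rpow_nonneg hl0.le _)
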